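/- Let L be a lattice (free finitely generated abelian group) with dual lattice L*, and let σ ⊆ L ⊗ ℝ be a rational polyhedral cone with dual cone σ̌ ⊆ L* ⊗ ℝ. Then a lattice element λ ∈ L satisfies ⟨λ, χ⟩ ≥ 0 for all χ ∈ σ̌ ∩ L* if and only if λ ∈ σ. -/
import Mathlib


open Finset

/-- The real points of a lattice vector. -/
def toReal {n : ℕ} (l : Fin n → ℤ) : Fin n → ℝ := fun i => (l i : ℝ)

/-- `σ` is a rational polyhedral cone: the set of nonnegative real combinations of
finitely many lattice vectors. -/
def IsRatPolyhedralCone {n : ℕ} (σ : Set (Fin n → ℝ)) : Prop :=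
  ∃ (m : ℕ) (v : Fin m → Fin n → ℤ),
    σ = {x | ∃ c : Fin m → ℝ, (∀ i, 0 ≤ c i) ∧ x = ∑ i, c i • toReal (v i)}

/-- The dual cone of `σ ⊆ ℝⁿ` with respect to the standard pairing. -/
def dualCone {n : ℕ} (σ : Set (Fin n → ℝ)) : Set (Fin n → ℝ) :=
  {χ | ∀ x ∈ σ, 0 ≤ ∑ i, x i * χ i}

lemma pair_sub_smul_left {n : ℕ} (x y z : Fin n → ℚ) (a : ℚ) :
    ∑ j, (x - a • y) j * z j = (∑ j, x j * z j) - a * ∑ j, y j * z j := by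
  simp [sub_mul, Finset.sum_sub_distrib, Finset.mul_sum, mul_assoc]

lemma pair_sub_smul_right {n : ℕ} (x y z : Fin n → ℚ) (a : ℚ) :
    ∑ j, x j * (y - a • z) j = (∑ j, x j * y j) - a * ∑ j, x j * z j := by
  simp [mul_sub, Finset.sum_sub_distrib, Finset.mul_sum, mul_left_comm]

/-- Farkas' lemma over the rationals, proved by induction on the number of generators. -/
theorem farkasQ {n : ℕ} : ∀ (m : ℕ) (v : Fin m → Fin n → ℚ) (l : Fin n → ℚ),
    (∃ c : Fin m → ℚ, (∀ i, 0 ≤ c i) ∧ l = ∑ i, c i • v i) ∨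
    (∃ χ : Fin n → ℚ, (∀ i, 0 ≤ ∑ j, v i j * χ j) ∧ (∑ j, l j * χ j) < 0) := by
  intro m
  induction m with
  | zero =>
    intro v l
    by_cases hl : l = 0
    · exact Or.inl ⟨0, fun i => le_rfl, by simp [hl]⟩
    · refine Or.inr ⟨-l, fun i => i.elim0, ?_⟩
      have h1 : ∃ j, l j ≠ 0 := by
        by_contra h; push_neg at h; exact hl (funext h)
      obtain ⟨j0, hj0⟩ := h1
      have hpos : (0:ℚ) < ∑ j, l j * l j :=
        Finset.sum_pos' (fun j _ => mul_self_nonneg _)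
          ⟨j0, Finset.mem_univ _, mul_self_pos.mpr hj0⟩
      have h2 : ∑ j, l j * (-l) j = -(∑ j, l j * l j) := by
        simp [mul_neg]
      rw [h2]; linarith
  | succ m ih =>
    intro v l
    set u : Fin n → ℚ := v (Fin.last m) with hu_def
    set w : Fin m → Fin n → ℚ := fun i => v i.castSucc with hw_def
    rcases ih w l with ⟨c, hc, hl⟩ | ⟨χ, hχ, hlχ⟩
    · refine Or.inl ⟨Fin.snoc c 0, ?_, ?_⟩
      · intro i
        induction i using Fin.lastCases with
        | last => simp
        | cast i => simpa using hc i
      · rw [Fin.sum_univ_castSucc]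
        simp only [Fin.snoc_castSucc, Fin.snoc_last, zero_smul, add_zero]
        exact hl
    · by_cases hu : 0 ≤ ∑ j, u j * χ j
      · refine Or.inr ⟨χ, ?_, hlχ⟩
        intro i
        induction i using Fin.lastCases with
        | last => exact hu
        | cast i => exact hχ i
      · push_neg at hu
        set α : ℚ := ∑ j, u j * χ j with hα
        have hαne : α ≠ 0 := ne_of_lt hu
        set w' : Fin m → Fin n → ℚ :=
          fun i => w i - ((∑ j, w i j * χ j) / α) • u with hw'
        set l' : Fin n → ℚ := l - ((∑ j, l j * χ j) / α) • u with hl'def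
        rcases ih w' l' with ⟨c, hc, hrep⟩ | ⟨χ', hχ', hl'χ'⟩
        · -- l lies in the cone generated by all of v
          set S : ℚ := ∑ i, c i * ((∑ j, w i j * χ j) / α) with hS
          set t : ℚ := (∑ j, l j * χ j) / α - S with ht
          have hSnn : 0 ≤ ∑ i, c i * (∑ j, w i j * χ j) :=
            Finset.sum_nonneg fun i _ => mul_nonneg (hc i) (hχ i)
          have hSalt : S = (∑ i, c i * (∑ j, w i j * χ j)) / α := by
            rw [hS, Finset.sum_div]
            exact Finset.sum_congr rfl fun i _ => (mul_div_assoc _ _ _).symm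
          have htnn : 0 ≤ t := by
            rw [ht, hSalt, div_sub_div_same]
            rw [div_nonneg_iff]
            exact Or.inr ⟨by linarith, le_of_lt hu⟩
          refine Or.inl ⟨Fin.snoc c t, ?_, ?_⟩
          · intro i
            induction i using Fin.lastCases with
            | last => simpa using htnn
            | cast i => simpa using hc i
          · rw [Fin.sum_univ_castSucc]
            simp only [Fin.snoc_castSucc, Fin.snoc_last]
            show l = (∑ i, c i • w i) + t • u
            have expand : ∑ i, c i • w' i = (∑ i, c i • w i) - S • u := by
              simp only [hw', smul_sub, smul_smul]
              rw [Finset.sum_sub_distrib, ← Finset.sum_smul, ← hS]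
            have key : l - ((∑ j, l j * χ j) / α) • u = (∑ i, c i • w i) - S • u := by
              rw [← hl'def, hrep, expand]
            have h2 : l = ((∑ i, c i • w i) - S • u) + ((∑ j, l j * χ j) / α) • u :=
              sub_eq_iff_eq_add.mp key
            rw [h2, ht, sub_smul]
            abel
        · -- a separating functional exists
          set β : ℚ := ∑ j, u j * χ' j with hβ
          refine Or.inr ⟨χ' - (β / α) • χ, ?_, ?_⟩
          · intro i
            rw [pair_sub_smul_right]
            induction i using Fin.lastCases with
            | last =>
              have e1 : ∑ j, v (Fin.last m) j * χ' j = β := hβ.symm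
              have e2 : ∑ j, v (Fin.last m) j * χ j = α := hα.symm
              rw [e1, e2, div_mul_cancel₀ _ hαne, sub_self]
            | cast i =>
              have h := hχ' i
              have h2 : ∑ j, w' i j * χ' j
                  = (∑ j, w i j * χ' j) - ((∑ j, w i j * χ j) / α) * β := by
                simp only [hw']
                rw [pair_sub_smul_left, ← hβ]
              rw [h2] at h
              have e3 : ((∑ j, w i j * χ j) / α) * β
                  = (β / α) * (∑ j, w i j * χ j) := by ring
              show 0 ≤ (∑ j, w i j * χ' j) - (β / α) * ∑ j, w i j * χ j
              linarith [h, e3.symm.le, e3.le]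
          · rw [pair_sub_smul_right]
            have h2 : ∑ j, l' j * χ' j
                = (∑ j, l j * χ' j) - ((∑ j, l j * χ j) / α) * β := by
              simp only [hl'def]
              rw [pair_sub_smul_left, ← hβ]
            rw [h2] at hl'χ'
            have e3 : ((∑ j, l j * χ j) / α) * β = (β / α) * (∑ j, l j * χ j) := by
              ring
            linarith [hl'χ', e3.le, e3.symm.le]

/-- a lattice vector pairs nonnegatively with every lattice point of the
dual cone `σ̌` if and only if it lies in the rational polyhedral cone `σ`. -/
theorem mem_cone_iff_nonneg_pairing_with_dual_lattice
    {n : ℕ} (σ : Set (Fin n → ℝ)) (hσ : IsRatPolyhedralCone σ) (l : Fin n → ℤ) :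
    (∀ χ : Fin n → ℤ, toReal χ ∈ dualCone σ → 0 ≤ ∑ i, l i * χ i) ↔ toReal l ∈ σ := by
  obtain ⟨m, v, hσeq⟩ := hσ
  constructor
  · intro H
    rcases farkasQ m (fun i j => (v i j : ℚ)) (fun j => (l j : ℚ)) with
      ⟨c, hc, hrep⟩ | ⟨χ, hχ, hlχ⟩
    · rw [hσeq]
      refine ⟨fun i => (c i : ℝ), fun i => show (0:ℝ) ≤ (c i : ℝ) by exact_mod_cast hc i, ?_⟩
      funext j
      have := congrFun hrep j
      simp only [Finset.sum_apply, Pi.smul_apply, smul_eq_mul] at this ⊢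
      simp only [toReal]
      exact_mod_cast this
    · exfalso
      set D : ℕ := ∏ j, (χ j).den with hD
      have hDpos : 0 < D := Finset.prod_pos fun j _ => (χ j).pos
      set χ' : Fin n → ℤ := fun j => (χ j).num * (D / (χ j).den : ℕ) with hχ'
      have hcast : ∀ j, (χ' j : ℚ) = (D : ℚ) * χ j := by
        intro j
        have hdvd : (χ j).den ∣ D := Finset.dvd_prod_of_mem _ (Finset.mem_univ j)
        have hm : ((D / (χ j).den : ℕ) : ℚ) * ((χ j).den : ℚ) = (D : ℚ) := by
          rw [← Nat.cast_mul, Nat.div_mul_cancel hdvd]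
        have hnum : ((χ j).num : ℚ) = χ j * ((χ j).den : ℚ) :=
          (Rat.mul_den_eq_num (χ j)).symm
        have h0 : χ' j = (χ j).num * ((D / (χ j).den : ℕ) : ℤ) := rfl
        calc (χ' j : ℚ) = ((χ j).num : ℚ) * ((D / (χ j).den : ℕ) : ℚ) := by
              rw [h0, Int.cast_mul, Int.cast_natCast]
          _ = χ j * (((D / (χ j).den : ℕ) : ℚ) * ((χ j).den : ℚ)) := by
              rw [hnum]; ring
          _ = (D : ℚ) * χ j := by rw [hm]; ring
      -- the scaled vector lies in the dual cone
      have hinner : ∀ i, (0:ℝ) ≤ ∑ j, (v i j : ℝ) * (χ' j : ℝ) := by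
        intro i
        have hq : (0:ℚ) ≤ ∑ j, (v i j : ℚ) * (χ' j : ℚ) := by
          have : ∑ j, (v i j : ℚ) * (χ' j : ℚ) = (D : ℚ) * ∑ j, (v i j : ℚ) * χ j := by
            rw [Finset.mul_sum]
            exact Finset.sum_congr rfl fun j _ => by rw [hcast j]; ring
          rw [this]
          exact mul_nonneg (by positivity) (hχ i)
        exact_mod_cast hq
      have hdual : toReal χ' ∈ dualCone σ := by
        intro x hx
        rw [hσeq] at hx
        obtain ⟨c, hc0, rfl⟩ := hx
        have : ∑ j, (∑ i, c i • toReal (v i)) j * toReal χ' j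
            = ∑ i, c i * ∑ j, (v i j : ℝ) * (χ' j : ℝ) := by
          simp only [Finset.sum_apply, Pi.smul_apply, smul_eq_mul, toReal]
          simp only [Finset.sum_mul]
          rw [Finset.sum_comm]
          refine Finset.sum_congr rfl fun i _ => ?_
          rw [Finset.mul_sum]
          exact Finset.sum_congr rfl fun j _ => by ring
        rw [this]
        exact Finset.sum_nonneg fun i _ => mul_nonneg (hc0 i) (hinner i)
      have hneg : (∑ i, l i * χ' i : ℤ) < 0 := by
        have hq : (∑ j, (l j : ℚ) * (χ' j : ℚ)) < 0 := by
          have : ∑ j, (l j : ℚ) * (χ' j : ℚ) = (D : ℚ) * ∑ j, (l j : ℚ) * χ j := by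
            rw [Finset.mul_sum]
            exact Finset.sum_congr rfl fun j _ => by rw [hcast j]; ring
          rw [this]
          exact mul_neg_of_pos_of_neg (by positivity) hlχ
        exact_mod_cast hq
      exact absurd (H χ' hdual) (not_le.mpr hneg)
  · intro hl χ hχ
    have h := hχ (toReal l) hl
    simp only [toReal] at h
    exact_mod_cast h
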